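/- Let k ≥ 2 be an integer, ω = √(4k²−1), and f₁ : ℝ × ℝ → ℂ³ defined by f₁(u,v) = ( √((2k²−1)/(4k²−1))·exp(i·2kv/ω), (k/ω)·exp(i·(u − v/ω)), (k/ω)·exp(i·(u + v/ω)) ). For each (u,v), let f_u(u,v) = ∂f₁/∂u and f_v(u,v) = ∂f₁/∂v denote the partial derivatives (derivatives of t ↦ f₁(t,v) at u and of t ↦ f₁(u,t) at v), and f_uu, f_vv the corresponding second partial derivatives. Then for all (u,v): (i) ‖f_u(u,v)‖² = ‖f_v(u,v)‖² = 2k²/(4k²−1); (ii) Re⟨f_u(u,v), f_v(u,v)⟩ = 0 (real part of the Hermitian inner product on ℂ³); and (iii) f_uu(u,v) + f_vv(u,v) = −(4k²/(4k²−1))·f₁(u,v). Hence the induced metric is flat (a constant multiple 2k²/(4k²−1) of the Euclidean metric) and, by Takahashi's theorem, f₁ is a minimal immersion into S⁵. -/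

import Mathlib

open Real Complex

private lemma hasDerivAt_cexp_affine (c a b : ℂ) (t : ℝ) :
    HasDerivAt (fun s : ℝ => c * Complex.exp (a * s + b))
      (a * (c * Complex.exp (a * t + b))) t := by
  have h1 : HasDerivAt (fun s : ℝ => (s : ℂ)) 1 t := by
    simpa using (hasDerivAt_id t).ofReal_comp
  have h2 := (((h1.const_mul a).add_const b).cexp).const_mul c
  refine h2.congr_deriv ?_
  ring

private lemma hasDerivAt_E3 {f g h : ℝ → ℂ} {f' g' h' : ℂ} {t : ℝ}
    (hf : HasDerivAt f f' t) (hg : HasDerivAt g g' t) (hh : HasDerivAt h h' t) :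
    HasDerivAt (fun s => (WithLp.equiv 2 (Fin 3 → ℂ)).symm ![f s, g s, h s])
      ((WithLp.equiv 2 (Fin 3 → ℂ)).symm ![f', g', h']) t := by
  have hp : HasDerivAt (fun s => (![f s, g s, h s] : Fin 3 → ℂ)) ![f', g', h'] t := by
    rw [hasDerivAt_pi]
    intro i
    fin_cases i <;> simpa
  exact ((PiLp.continuousLinearEquiv 2 ℝ
    (fun _ : Fin 3 => ℂ)).symm.toContinuousLinearMap.hasFDerivAt.comp_hasDerivAt t hp :)

private lemma norm3 (a b c : ℂ) : ‖(WithLp.equiv 2 (Fin 3 → ℂ)).symm ![a,b,c]‖^2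
    = ‖a‖ ^ 2 + ‖b‖ ^ 2 + ‖c‖ ^ 2 := by
  rw [EuclideanSpace.norm_eq, Real.sq_sqrt (by positivity)]
  simp [Fin.sum_univ_three]

/-- the explicit torus `f₁` in `S⁵ ⊂ ℂ³` is flat and minimal:
its partial derivatives satisfy `‖f_u‖² = ‖f_v‖² = 2k²/(4k²−1)`,
`Re⟨f_u, f_v⟩ = 0`, and `f_uu + f_vv = −(4k²/(4k²−1))·f₁` (whence, by
Takahashi's theorem, `f₁` is a flat minimal immersion into `S⁵`). -/
theorem flat_torus_minimal
    (k : ℤ) (hk : 2 ≤ k)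
    (ω : ℝ) (hω : ω = Real.sqrt (4 * (k : ℝ) ^ 2 - 1))
    (f₁ : ℝ × ℝ → EuclideanSpace ℂ (Fin 3))
    (hf₁ : ∀ u v : ℝ, f₁ (u, v) = (WithLp.equiv 2 (Fin 3 → ℂ)).symm
      ![(Real.sqrt ((2 * (k : ℝ) ^ 2 - 1) / (4 * (k : ℝ) ^ 2 - 1)) : ℂ) *
          Complex.exp (Complex.I * (2 * (k : ℝ) * v / ω : ℝ)),
        ((k : ℝ) / ω : ℂ) * Complex.exp (Complex.I * ((u - v / ω : ℝ) : ℂ)),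
        ((k : ℝ) / ω : ℂ) * Complex.exp (Complex.I * ((u + v / ω : ℝ) : ℂ))]) :
    ∀ u v : ℝ,
      ‖deriv (fun t => f₁ (t, v)) u‖ ^ 2 =
          2 * (k : ℝ) ^ 2 / (4 * (k : ℝ) ^ 2 - 1) ∧
      ‖deriv (fun t => f₁ (u, t)) v‖ ^ 2 =
          2 * (k : ℝ) ^ 2 / (4 * (k : ℝ) ^ 2 - 1) ∧
      (inner ℂ (deriv (fun t => f₁ (t, v)) u) (deriv (fun t => f₁ (u, t)) v) : ℂ).re
          = 0 ∧
      deriv (deriv (fun t => f₁ (t, v))) u + deriv (deriv (fun t => f₁ (u, t))) v =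
        (-(4 * (k : ℝ) ^ 2 / (4 * (k : ℝ) ^ 2 - 1))) • f₁ (u, v) := by
  intro u v
  have hk2 : (2:ℝ) ≤ (k:ℝ) := by exact_mod_cast hk
  have h41 : (0:ℝ) < 4 * (k:ℝ)^2 - 1 := by nlinarith
  have h21 : (0:ℝ) ≤ 2 * (k:ℝ)^2 - 1 := by nlinarith
  have hω2 : ω ^ 2 = 4 * (k:ℝ)^2 - 1 := by rw [hω]; exact Real.sq_sqrt h41.le
  have hωpos : 0 < ω := by rw [hω]; exact Real.sqrt_pos.mpr h41
  have hωne : ω ≠ 0 := hωpos.ne'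
  have hωc : ((ω:ℂ))^2 = 4 * (k:ℂ)^2 - 1 := by exact_mod_cast congrArg Complex.ofReal hω2
  have hωcne : (ω:ℂ) ≠ 0 := by exact_mod_cast hωne
  have h41c : ((4:ℂ) * (k:ℂ)^2 - 1) ≠ 0 := by
    rw [← hωc]; exact pow_ne_zero _ hωcne
  set A : ℝ := Real.sqrt ((2*(k:ℝ)^2 - 1)/(4*(k:ℝ)^2 - 1)) with hA
  have hA0 : 0 ≤ A := Real.sqrt_nonneg _
  have hA2 : A^2 = (2*(k:ℝ)^2 - 1)/(4*(k:ℝ)^2-1) := Real.sq_sqrt (div_nonneg h21 h41.le)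
  -- constants
  set C0 : ℂ := (A:ℂ) * Complex.exp (Complex.I * ((2 * (k:ℝ) * v / ω : ℝ) : ℂ)) with hC0
  set C1 : ℂ := (((k:ℝ) : ℂ) / (ω:ℂ)) with hC1
  set B2 : ℂ := Complex.I * (((v/ω : ℝ)) : ℂ) with hB2
  set B1 : ℂ := -B2 with hB1
  set a0 : ℂ := Complex.I * (2*(k:ℂ)) / (ω:ℂ) with ha0
  set a2 : ℂ := Complex.I / (ω:ℂ) with ha2
  set a1 : ℂ := -a2 with ha1
  set Bu : ℂ := Complex.I * ((u:ℝ) : ℂ) with hBu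
  -- the two slice functions in affine-exponential form
  have hU : (fun t => f₁ (t, v)) = fun t : ℝ => (WithLp.equiv 2 (Fin 3 → ℂ)).symm
      ![C0 * Complex.exp ((0:ℂ) * t + 0),
        C1 * Complex.exp (Complex.I * t + B1),
        C1 * Complex.exp (Complex.I * t + B2)] := by
    funext t
    rw [hf₁ t v]
    refine congrArg _ ?_
    funext i
    fin_cases i
    · show (A:ℂ) * Complex.exp (Complex.I * ((2 * (k:ℝ) * v / ω : ℝ) : ℂ))
        = C0 * Complex.exp ((0:ℂ) * t + 0)
      rw [hC0, zero_mul, zero_add, Complex.exp_zero, mul_one]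
    · show C1 * Complex.exp (Complex.I * ((t - v / ω : ℝ) : ℂ))
        = C1 * Complex.exp (Complex.I * t + B1)
      have h : (Complex.I * ((t - v / ω : ℝ) : ℂ)) = Complex.I * t + B1 := by
        rw [hB1, hB2]; push_cast; ring
      rw [h]
    · show C1 * Complex.exp (Complex.I * ((t + v / ω : ℝ) : ℂ))
        = C1 * Complex.exp (Complex.I * t + B2)
      have h : (Complex.I * ((t + v / ω : ℝ) : ℂ)) = Complex.I * t + B2 := by
        rw [hB2]; push_cast; ring
      rw [h]
  have hV : (fun t => f₁ (u, t)) = fun t : ℝ => (WithLp.equiv 2 (Fin 3 → ℂ)).symm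
      ![(A:ℂ) * Complex.exp (a0 * t + 0),
        C1 * Complex.exp (a1 * t + Bu),
        C1 * Complex.exp (a2 * t + Bu)] := by
    funext t
    rw [hf₁ u t]
    refine congrArg _ ?_
    funext i
    fin_cases i
    · show (A:ℂ) * Complex.exp (Complex.I * ((2 * (k:ℝ) * t / ω : ℝ) : ℂ))
        = (A:ℂ) * Complex.exp (a0 * t + 0)
      have h : (Complex.I * ((2 * (k:ℝ) * t / ω : ℝ) : ℂ)) = a0 * t + 0 := by
        rw [ha0]; push_cast; ring
      rw [h]
    · show C1 * Complex.exp (Complex.I * ((u - t / ω : ℝ) : ℂ))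
        = C1 * Complex.exp (a1 * t + Bu)
      have h : (Complex.I * ((u - t / ω : ℝ) : ℂ)) = a1 * t + Bu := by
        rw [ha1, ha2, hBu]; push_cast; ring
      rw [h]
    · show C1 * Complex.exp (Complex.I * ((u + t / ω : ℝ) : ℂ))
        = C1 * Complex.exp (a2 * t + Bu)
      have h : (Complex.I * ((u + t / ω : ℝ) : ℂ)) = a2 * t + Bu := by
        rw [ha2, hBu]; push_cast; ring
      rw [h]
  -- first derivatives
  have hdU : deriv (fun t => f₁ (t, v)) = fun t : ℝ => (WithLp.equiv 2 (Fin 3 → ℂ)).symm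
      ![0, (Complex.I * C1) * Complex.exp (Complex.I * t + B1),
           (Complex.I * C1) * Complex.exp (Complex.I * t + B2)] := by
    funext t
    rw [hU]
    refine HasDerivAt.deriv ?_
    refine hasDerivAt_E3 ?_ ?_ ?_
    · simpa using hasDerivAt_cexp_affine C0 0 0 t
    · rw [mul_assoc]; exact hasDerivAt_cexp_affine C1 Complex.I B1 t
    · rw [mul_assoc]; exact hasDerivAt_cexp_affine C1 Complex.I B2 t
  have hdV : deriv (fun t => f₁ (u, t)) = fun t : ℝ => (WithLp.equiv 2 (Fin 3 → ℂ)).symm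
      ![(a0 * (A:ℂ)) * Complex.exp (a0 * t + 0),
        (a1 * C1) * Complex.exp (a1 * t + Bu),
        (a2 * C1) * Complex.exp (a2 * t + Bu)] := by
    funext t
    rw [hV]
    refine HasDerivAt.deriv ?_
    refine hasDerivAt_E3 ?_ ?_ ?_
    · rw [mul_assoc]; exact hasDerivAt_cexp_affine (A:ℂ) a0 0 t
    · rw [mul_assoc]; exact hasDerivAt_cexp_affine C1 a1 Bu t
    · rw [mul_assoc]; exact hasDerivAt_cexp_affine C1 a2 Bu t
  -- second derivatives (values at u, v)
  have hdU2 : deriv (deriv (fun t => f₁ (t, v))) u = (WithLp.equiv 2 (Fin 3 → ℂ)).symm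
      ![0, (Complex.I * (Complex.I * C1)) * Complex.exp (Complex.I * u + B1),
           (Complex.I * (Complex.I * C1)) * Complex.exp (Complex.I * u + B2)] := by
    rw [hdU]
    refine HasDerivAt.deriv ?_
    refine hasDerivAt_E3 (hasDerivAt_const u 0) ?_ ?_
    · rw [mul_assoc]; exact hasDerivAt_cexp_affine (Complex.I * C1) Complex.I B1 u
    · rw [mul_assoc]; exact hasDerivAt_cexp_affine (Complex.I * C1) Complex.I B2 u
  have hdV2 : deriv (deriv (fun t => f₁ (u, t))) v = (WithLp.equiv 2 (Fin 3 → ℂ)).symm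
      ![(a0 * (a0 * (A:ℂ))) * Complex.exp (a0 * v + 0),
        (a1 * (a1 * C1)) * Complex.exp (a1 * v + Bu),
        (a2 * (a2 * C1)) * Complex.exp (a2 * v + Bu)] := by
    rw [hdV]
    refine HasDerivAt.deriv ?_
    refine hasDerivAt_E3 ?_ ?_ ?_
    · rw [mul_assoc]; exact hasDerivAt_cexp_affine (a0 * (A:ℂ)) a0 0 v
    · rw [mul_assoc]; exact hasDerivAt_cexp_affine (a1 * C1) a1 Bu v
    · rw [mul_assoc]; exact hasDerivAt_cexp_affine (a2 * C1) a2 Bu v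
  -- goal 1
  refine ⟨?_, ?_, ?_, ?_⟩
  · rw [hdU, norm3]
    simp [hC1, hB1, hB2, Complex.norm_exp, map_mul, map_div₀, Complex.norm_intCast, Complex.norm_I]
    rw [abs_of_pos hωpos, abs_of_pos (show (0:ℝ) < (k:ℝ) by linarith), div_pow, hω2]
    ring
  · rw [hdV, norm3]
    simp [hC0, hC1, ha0, ha1, ha2, hBu, Complex.norm_exp, map_mul, map_div₀,
      Complex.norm_intCast, Complex.norm_real, Complex.norm_I]
    rw [abs_of_pos hωpos, abs_of_pos (show (0:ℝ) < (k:ℝ) by linarith), _root_.abs_of_nonneg hA0]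
    rw [mul_pow, hA2, div_pow]
    rw [show (ω⁻¹ * ((k:ℝ)/ω))^2 = (k:ℝ)^2/(ω^2)^2 from by
      rw [mul_pow, inv_pow, div_pow]; ring, hω2]
    have h41' : (k:ℝ)^2*4 - 1 ≠ 0 := by linarith
    field_simp
    ring
  · -- inner product vanishes
    have hI : Complex.I * Complex.I = -1 := Complex.I_mul_I
    have hE1 : Complex.exp (a1 * (v:ℝ) + Bu) = Complex.exp (Complex.I * (u:ℝ) + B1) := by
      congr 1
      rw [ha1, ha2, hBu, hB1, hB2]; push_cast; ring
    have hE2 : Complex.exp (a2 * (v:ℝ) + Bu) = Complex.exp (Complex.I * (u:ℝ) + B2) := by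
      congr 1
      rw [ha2, hBu, hB2]; push_cast; ring
    have hu1 : (starRingEnd ℂ) (Complex.exp (Complex.I * (u:ℝ) + B1)) *
        Complex.exp (Complex.I * (u:ℝ) + B1) = 1 := by
      rw [← Complex.exp_conj, ← Complex.exp_add]
      have h0 : (starRingEnd ℂ) (Complex.I * (u:ℝ) + B1) + (Complex.I * (u:ℝ) + B1) = 0 := by
        rw [hB1, hB2]
        simp [map_add, map_mul, map_neg, Complex.conj_I, Complex.conj_ofReal]
        ring
      rw [h0, Complex.exp_zero]
    have hu2 : (starRingEnd ℂ) (Complex.exp (Complex.I * (u:ℝ) + B2)) *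
        Complex.exp (Complex.I * (u:ℝ) + B2) = 1 := by
      rw [← Complex.exp_conj, ← Complex.exp_add]
      have h0 : (starRingEnd ℂ) (Complex.I * (u:ℝ) + B2) + (Complex.I * (u:ℝ) + B2) = 0 := by
        rw [hB2]
        simp [map_add, map_mul, Complex.conj_I, Complex.conj_ofReal]
        ring
      rw [h0, Complex.exp_zero]
    have hz : (inner ℂ ((WithLp.equiv 2 (Fin 3 → ℂ)).symm
        ![0, (Complex.I * C1) * Complex.exp (Complex.I * (u:ℝ) + B1),
             (Complex.I * C1) * Complex.exp (Complex.I * (u:ℝ) + B2)])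
        ((WithLp.equiv 2 (Fin 3 → ℂ)).symm
        ![(a0 * (A:ℂ)) * Complex.exp (a0 * (v:ℝ) + 0),
          (a1 * C1) * Complex.exp (a1 * (v:ℝ) + Bu),
          (a2 * C1) * Complex.exp (a2 * (v:ℝ) + Bu)]) : ℂ) = 0 := by
      rw [hE1, hE2]
      simp only [PiLp.inner_apply, RCLike.inner_apply, WithLp.equiv_symm_apply, PiLp.toLp_apply,
        Fin.sum_univ_three, Matrix.cons_val_zero, Matrix.cons_val_one, Matrix.head_cons,
        Matrix.cons_val_two, Matrix.tail_cons, map_mul, map_zero, Complex.conj_I,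
        map_div₀, Complex.conj_ofReal, zero_mul]
      rw [hC1, ha1, ha2]
      simp only [map_div₀, Complex.conj_ofReal]
      push_cast
      linear_combination ((Complex.I * Complex.I * ((k:ℂ)/(ω:ℂ))^2)/(ω:ℂ)) * hu1 -
        ((Complex.I * Complex.I * ((k:ℂ)/(ω:ℂ))^2)/(ω:ℂ)) * hu2
    simp only [hdU, hdV]
    rw [hz]
    simp
  · -- Laplace equation
    have hI : Complex.I * Complex.I = -1 := Complex.I_mul_I
    rw [hdU2, hdV2, hf₁ u v]
    have hadd : ∀ x y : Fin 3 → ℂ, (WithLp.equiv 2 (Fin 3 → ℂ)).symm x +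
        (WithLp.equiv 2 (Fin 3 → ℂ)).symm y = (WithLp.equiv 2 (Fin 3 → ℂ)).symm (x + y) :=
      fun _ _ => rfl
    have hsmul : ∀ (r : ℝ) (x : Fin 3 → ℂ), r • (WithLp.equiv 2 (Fin 3 → ℂ)).symm x =
        (WithLp.equiv 2 (Fin 3 → ℂ)).symm (r • x) := fun _ _ => rfl
    rw [hadd, hsmul]
    refine congrArg _ ?_
    rw [Matrix.vec3_add, Matrix.smul_vec3]
    have hE0 : Complex.exp (a0 * (v:ℝ) + 0) =
        Complex.exp (Complex.I * ((2 * (k:ℝ) * v / ω : ℝ) : ℂ)) := by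
      congr 1; rw [ha0]; push_cast; ring
    have hE1a : Complex.exp (Complex.I * (u:ℝ) + B1) =
        Complex.exp (Complex.I * ((u - v / ω : ℝ) : ℂ)) := by
      congr 1; rw [hB1, hB2]; push_cast; ring
    have hE1b : Complex.exp (a1 * (v:ℝ) + Bu) =
        Complex.exp (Complex.I * ((u - v / ω : ℝ) : ℂ)) := by
      congr 1; rw [ha1, ha2, hBu]; push_cast; ring
    have hE2a : Complex.exp (Complex.I * (u:ℝ) + B2) =
        Complex.exp (Complex.I * ((u + v / ω : ℝ) : ℂ)) := by
      congr 1; rw [hB2]; push_cast; ring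
    have hE2b : Complex.exp (a2 * (v:ℝ) + Bu) =
        Complex.exp (Complex.I * ((u + v / ω : ℝ) : ℂ)) := by
      congr 1; rw [ha2, hBu]; push_cast; ring
    refine Matrix.vec3_eq ?_ ?_ ?_ <;> rw [Complex.real_smul]
    · rw [hE0]
      set E0 : ℂ := Complex.exp (Complex.I * ((2 * (k:ℝ) * v / ω : ℝ) : ℂ)) with hE0d
      rw [ha0]
      push_cast
      field_simp [show (k:ℂ)^2*4 - 1 ≠ 0 by rw [mul_comm]; exact h41c]
      linear_combination ((4*(k:ℂ)^2 * (A:ℂ) * E0) * (4*(k:ℂ)^2 - 1)) * hI +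
        (4*(k:ℂ)^2*(A:ℂ)*E0) * hωc
    · rw [hE1a, hE1b]
      set E1 : ℂ := Complex.exp (Complex.I * ((u - v / ω : ℝ) : ℂ)) with hE1d
      rw [hC1, ha1, ha2]
      push_cast
      field_simp [show (k:ℂ)^2*4 - 1 ≠ 0 by rw [mul_comm]; exact h41c]
      linear_combination (((k:ℂ) * E1 * ((ω:ℂ)^2 + 1)) * (4*(k:ℂ)^2 - 1)) * hI +
        ((k:ℂ)*E1) * hωc +
        ((k:ℂ)*E1*(1 - (ω:ℂ)^4 - 4*(k:ℂ)^2 + 4*(k:ℂ)^2*(ω:ℂ)^4)) * hI +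
        ((k:ℂ)*E1*((ω:ℂ)^2 - 1)) * hωc +
        ((k:ℂ)*E1*((ω:ℂ)^4 - 1)*(1 - 4*(k:ℂ)^2)) * hI - ((k:ℂ)*E1*((ω:ℂ)^2 - 1)) * hωc
    · rw [hE2a, hE2b]
      set E2 : ℂ := Complex.exp (Complex.I * ((u + v / ω : ℝ) : ℂ)) with hE2d
      rw [hC1, ha2]
      push_cast
      field_simp [show (k:ℂ)^2*4 - 1 ≠ 0 by rw [mul_comm]; exact h41c]
      linear_combination (((k:ℂ) * E2 * ((ω:ℂ)^2 + 1)) * (4*(k:ℂ)^2 - 1)) * hI +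
        ((k:ℂ)*E2) * hωc +
        ((k:ℂ)*E2*(1 - (ω:ℂ)^4 - 4*(k:ℂ)^2 + 4*(k:ℂ)^2*(ω:ℂ)^4)) * hI +
        ((k:ℂ)*E2*((ω:ℂ)^2 - 1)) * hωc +
        ((k:ℂ)*E2*((ω:ℂ)^4 - 1)*(1 - 4*(k:ℂ)^2)) * hI - ((k:ℂ)*E2*((ω:ℂ)^2 - 1)) * hωc
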